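/- arXiv:2603.03709 — 3 statements merged into one kernel-verified Lean document; each statement's English description precedes it below -/
import Mathlib

section
/- For every integer j ≥ p one has A_j ≤ 2^(j−1) − 1; that is, the fixed-direction depth count stays strictly below half the degree 2^j of the j-th iterate. -/
theorem stmt_5 (p : ℤ) (hp : 2 ≤ p) (A B : ℤ → ℤ)
    (hA0 : A 0 = 1) (hAneg : ∀ j : ℤ, j < 0 → A j = 0)
    (hBle : ∀ j : ℤ, j ≤ 0 → B j = 0)
    (hA : ∀ j : ℤ, 1 ≤ j → A j = 2 ^ (j - 1).toNat - (A (j - p) + B (j - p)))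
    (hB : ∀ j : ℤ, 1 ≤ j → B j = 2 * (A (j - p) + B (j - p))) :
    ∀ j : ℤ, p ≤ j → A j ≤ 2 ^ (j - 1).toNat - 1 := by
  have key : ∀ n : ℕ, ∀ k : ℤ, k.toNat ≤ n →
      0 ≤ A k + B k ∧ (0 ≤ k → 1 ≤ A k + B k) := by
    intro n
    induction n with
    | zero =>
      intro k hk
      rcases lt_or_ge k 0 with h | h
      · rw [hAneg k h, hBle k h.le]
        constructor
        · norm_num
        · intro h0; omega
      · have hk0 : k = 0 := by omega
        subst hk0
        rw [hA0, hBle 0 le_rfl]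
        refine ⟨by norm_num, fun _ => by norm_num⟩
    | succ n ih =>
      intro k hk
      rcases lt_or_ge k 1 with h | h
      · rcases lt_or_ge k 0 with h0 | h0
        · rw [hAneg k h0, hBle k h0.le]
          constructor
          · norm_num
          · intro h1; omega
        · have hk0 : k = 0 := by omega
          subst hk0
          rw [hA0, hBle 0 le_rfl]
          refine ⟨by norm_num, fun _ => by norm_num⟩
      · have hsum : A k + B k = 2 ^ (k - 1).toNat + (A (k - p) + B (k - p)) := by
          rw [hA k h, hB k h]; ring
        have hkp : (k - p).toNat ≤ n := by omega
        have hprev := (ih (k - p) hkp).1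
        have hpow : (1 : ℤ) ≤ 2 ^ (k - 1).toNat := one_le_pow₀ (by norm_num)
        constructor
        · linarith
        · intro _; linarith
  intro j hj
  have h1 : 1 ≤ j := by omega
  rw [hA j h1]
  have hjp : 0 ≤ j - p := by omega
  have := (key (j - p).toNat (j - p) le_rfl).2 hjp
  linarith
end

section
/- For every integer j ≥ p (with p ≥ 2), each of the three quantities A_j, B_j, C_j is at most 2^(j−1), and moreover A_j ≤ 2^(j−1) − 1 and C_j ≤ 2^(j−1) − 1. -/
theorem stmt_18 (p : ℤ) (hp : 2 ≤ p) (A B : ℤ → ℤ)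
    (hA0 : A 0 = 1) (hAneg : ∀ j : ℤ, j < 0 → A j = 0)
    (hBle : ∀ j : ℤ, j ≤ 0 → B j = 0)
    (hA : ∀ j : ℤ, 1 ≤ j → A j = 2 ^ (j - 1).toNat - (A (j - p) + B (j - p)))
    (hB : ∀ j : ℤ, 1 ≤ j → B j = 2 * (A (j - p) + B (j - p))) (C : ℤ → ℤ)
    (hC : ∀ j : ℤ, 1 ≤ j → C j = 2 ^ j.toNat - (A j + B j) - (if p ∣ j then 2 ^ (j / p).toNat else 0)) :
    ∀ j : ℤ, p ≤ j →
      A j ≤ 2 ^ (j - 1).toNat ∧ B j ≤ 2 ^ (j - 1).toNat ∧ C j ≤ 2 ^ (j - 1).toNat ∧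
      A j ≤ 2 ^ (j - 1).toNat - 1 ∧ C j ≤ 2 ^ (j - 1).toNat - 1 := by
  have key : ∀ n : ℕ, ∀ k : ℤ, 0 ≤ k → k.toNat = n →
      1 ≤ A k + B k ∧ A k + B k ≤ 2 ^ n := by
    intro n
    induction n using Nat.strong_induction_on with
    | _ n ih =>
      intro k hk hkn
      rcases eq_or_lt_of_le hk with h0 | h1
      · have hk0 : k = 0 := h0.symm
        subst hk0
        have hn : n = 0 := by omega
        subst hn
        simp [hA0, hBle 0 le_rfl]
      · have hk1 : (1 : ℤ) ≤ k := h1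
        have hSk : A k + B k = 2 ^ (k - 1).toNat + (A (k - p) + B (k - p)) := by
          rw [hA k hk1, hB k hk1]; ring
        by_cases hkp : k - p < 0
        · have hA' : A (k - p) = 0 := hAneg _ hkp
          have hB' : B (k - p) = 0 := hBle _ hkp.le
          rw [hSk, hA', hB']
          constructor
          · have : (0:ℤ) < 2 ^ (k-1).toNat := by positivity
            omega
          · have hle : (k-1).toNat ≤ n := by omega
            have := pow_le_pow_right₀ (by norm_num : (1:ℤ) ≤ 2) hle
            omega
        · push_neg at hkp
          have hlt : (k - p).toNat < n := by omega
          obtain ⟨hl, hu⟩ := ih _ hlt (k - p) hkp rfl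
          rw [hSk]
          constructor
          · have : (0:ℤ) < 2 ^ (k-1).toNat := by positivity
            omega
          · have h1 : (k - p).toNat ≤ (k - 1).toNat - 1 := by omega
            have h2 : (k - 1).toNat ≤ n - 1 := by omega
            have hn1 : 1 ≤ n := by omega
            have e1 : (2:ℤ) ^ (k-1).toNat ≤ 2 ^ (n - 1) :=
              pow_le_pow_right₀ (by norm_num) h2
            have e2 : (2:ℤ) ^ (k-p).toNat ≤ 2 ^ (n - 1) :=
              pow_le_pow_right₀ (by norm_num) (by omega)
            have e3 : (2:ℤ) ^ (n - 1) + 2 ^ (n - 1) = 2 ^ n := by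
              rw [← two_mul, ← pow_succ']
              congr 1
              omega
            omega
  intro j hj
  have hj1 : (1 : ℤ) ≤ j := by omega
  have hjp : (0 : ℤ) ≤ j - p := by omega
  obtain ⟨hSl, hSu⟩ := key (j - p).toNat (j - p) hjp rfl
  have hAj := hA j hj1
  have hBj := hB j hj1
  have hCj := hC j hj1
  have hpos : (0:ℤ) < 2 ^ (j-1).toNat := by positivity
  have hAle : A j ≤ 2 ^ (j - 1).toNat - 1 := by omega
  have hBle' : B j ≤ 2 ^ (j - 1).toNat := by
    have h1 : (j - p).toNat + 1 ≤ (j - 1).toNat := by omega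
    have e1 : (2:ℤ) ^ ((j-p).toNat + 1) ≤ 2 ^ (j-1).toNat :=
      pow_le_pow_right₀ (by norm_num) h1
    have e2 : (2:ℤ) ^ ((j-p).toNat + 1) = 2 * 2 ^ (j-p).toNat := by
      rw [pow_succ']
    omega
  have hCle : C j ≤ 2 ^ (j - 1).toNat - 1 := by
    have hSj : A j + B j = 2 ^ (j - 1).toNat + (A (j - p) + B (j - p)) := by
      rw [hAj, hBj]; ring
    have e3 : (2:ℤ) ^ j.toNat = 2 ^ (j-1).toNat + 2 ^ (j-1).toNat := by
      rw [← two_mul, ← pow_succ']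
      congr 1
      omega
    set t := (if p ∣ j then (2:ℤ) ^ (j / p).toNat else 0) with ht
    have hind : (0:ℤ) ≤ t := by
      rw [ht]
      split_ifs
      · positivity
      · exact le_refl 0
    omega
  exact ⟨by omega, hBle', by omega, hAle, hCle⟩
end

section
/- For every integer j ≥ p (with p ≥ 2), one has A_j + B_j > 2^(j−1); equivalently, among integers j ≥ 1, A_j + B_j = 2^(j−1) holds if and only if 1 ≤ j ≤ p − 1. -/
theorem stmt_19 (p : ℤ) (hp : 2 ≤ p) (A B : ℤ → ℤ)
    (hA0 : A 0 = 1) (hAneg : ∀ j : ℤ, j < 0 → A j = 0)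
    (hBle : ∀ j : ℤ, j ≤ 0 → B j = 0)
    (hA : ∀ j : ℤ, 1 ≤ j → A j = 2 ^ (j - 1).toNat - (A (j - p) + B (j - p)))
    (hB : ∀ j : ℤ, 1 ≤ j → B j = 2 * (A (j - p) + B (j - p))) :
    (∀ j : ℤ, p ≤ j → 2 ^ (j - 1).toNat < A j + B j) ∧
    (∀ j : ℤ, 1 ≤ j → (A j + B j = 2 ^ (j - 1).toNat ↔ j ≤ p - 1)) := by
  have key : ∀ j : ℤ, 1 ≤ j →
      A j + B j = 2 ^ (j - 1).toNat + (A (j - p) + B (j - p)) := by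
    intro j hj
    rw [hA j hj, hB j hj]; ring
  have pos : ∀ n : ℕ, ∀ m : ℤ, m.toNat ≤ n →
      (0 ≤ A m + B m) ∧ (0 ≤ m → 0 < A m + B m) := by
    intro n
    induction n using Nat.strong_induction_on with
    | _ n ih =>
      intro m hm
      rcases lt_trichotomy m 0 with h | h | h
      · rw [hAneg m h, hBle m h.le]
        constructor
        · simp
        · intro h'; omega
      · subst h
        rw [hA0, hBle 0 le_rfl]
        constructor <;> norm_num
      · have h1 : (1 : ℤ) ≤ m := h
        rw [key m h1]
        have hmp : (m - p).toNat < m.toNat := by omega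
        have hrec := ih (m - p).toNat (lt_of_lt_of_le hmp hm) (m - p) le_rfl
        have hpow : (0 : ℤ) < 2 ^ (m - 1).toNat := by positivity
        constructor
        · linarith [hrec.1]
        · intro _; linarith [hrec.1]
  have main : ∀ j : ℤ, p ≤ j → 2 ^ (j - 1).toNat < A j + B j := by
    intro j hj
    rw [key j (by omega)]
    have hrec := (pos (j - p).toNat (j - p) le_rfl).2 (by omega)
    linarith
  refine ⟨main, fun j hj => ⟨?_, ?_⟩⟩
  · intro heq
    by_contra hc
    push_neg at hc
    have := main j (by omega)
    linarith
  · intro hle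
    rw [key j hj, hAneg (j - p) (by omega), hBle (j - p) (by omega)]
    ring
end
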